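/- Let P be a d-dimensional reflexive polytope and let v, w be roots of P with v ≠ −w and ⟨η_v, w⟩ > 0. Then ⟨η_w, v⟩ = 0, v + w is a root of P with F_{v+w} = F_w, and v + w is a semisimple root if and only if both v and w are semisimple roots. -/

import Mathlib

open Finset Set Pointwise

noncomputable section

/-- The standard pairing `⟨x, y⟩ = ∑ i, x i * y i` on `ℝ^d`. -/
def pairR {d : ℕ} (x y : Fin d → ℝ) : ℝ := ∑ i, x i * y i

/-- A point of `ℝ^d` is a lattice point if all its coordinates are integers. -/
def IsLatticePt {d : ℕ} (x : Fin d → ℝ) : Prop := ∀ i, ∃ n : ℤ, x i = (n : ℝ)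

/-- A lattice polytope: the convex hull of finitely many lattice points. -/
def IsLatticePolytope {d : ℕ} (P : Set (Fin d → ℝ)) : Prop :=
  ∃ V : Finset (Fin d → ℝ), (∀ x ∈ V, IsLatticePt x) ∧
    P = convexHull ℝ (V : Set (Fin d → ℝ))

/-- The dual polytope `P* = {y : ⟨x, y⟩ ≥ -1 for all x ∈ P}`. -/
def polarDual {d : ℕ} (P : Set (Fin d → ℝ)) : Set (Fin d → ℝ) :=
  {y | ∀ x ∈ P, -1 ≤ pairR x y}

/-- A reflexive polytope: a (full-dimensional) lattice polytope with `0` in its interior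
whose dual is again a lattice polytope. -/
def IsReflexive {d : ℕ} (P : Set (Fin d → ℝ)) : Prop :=
  IsLatticePolytope P ∧ (0 : Fin d → ℝ) ∈ interior P ∧ IsLatticePolytope (polarDual P)

/-- `F` is the facet of `P` with (unique) inner normal `η` normalized by `⟨η, F⟩ = -1`:
`F` is the part of `P` where the valid inequality `⟨η, ·⟩ ≥ -1` is tight, and `F` has
dimension `d - 1`. -/
def IsFacetNormal {d : ℕ} (P : Set (Fin d → ℝ)) (η : Fin d → ℝ)
    (F : Set (Fin d → ℝ)) : Prop :=
  (∀ x ∈ P, -1 ≤ pairR η x) ∧ F = {x ∈ P | pairR η x = -1} ∧ F.Nonempty ∧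
    Module.finrank ℝ (vectorSpan ℝ F) = d - 1

/-- `F` is a facet ((d-1)-dimensional face) of `P`. -/
def IsFacet {d : ℕ} (P F : Set (Fin d → ℝ)) : Prop := ∃ η, IsFacetNormal P η F

/-- A root of `P`: a lattice point in the relative interior of a facet of `P`. -/
def IsRoot {d : ℕ} (P : Set (Fin d → ℝ)) (m : Fin d → ℝ) : Prop :=
  IsLatticePt m ∧ ∃ F, IsFacet P F ∧ m ∈ intrinsicInterior ℝ F

/-- The facet `F_m` of `P` containing the root `m` in its relative interior
(for a root `m` there is exactly one such facet). -/
def rootFacet {d : ℕ} (P : Set (Fin d → ℝ)) (m : Fin d → ℝ) : Set (Fin d → ℝ) :=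
  ⋃₀ {F | IsFacet P F ∧ m ∈ intrinsicInterior ℝ F}

/-- The inner normal `η_m = η_{F_m}` of the facet of `P` containing the root `m`. -/
def rootNormal {d : ℕ} (P : Set (Fin d → ℝ)) (m : Fin d → ℝ) : Fin d → ℝ :=
  Classical.epsilon fun η => IsFacetNormal P η (rootFacet P m)

/-- The real extension of the `ℤ`-linear map on the lattice given by an integer matrix. -/
def intMatMap {d : ℕ} (A : Matrix (Fin d) (Fin d) ℤ) (x : Fin d → ℝ) : Fin d → ℝ :=
  (A.map (Int.cast : ℤ → ℝ)).mulVec x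

/-- `P` and `Q` are isomorphic as lattice polytopes: some `g ∈ GL_d(ℤ)` has real
extension mapping `P` onto `Q`. -/
def IsLatticeIso {d : ℕ} (P Q : Set (Fin d → ℝ)) : Prop :=
  ∃ A : Matrix (Fin d) (Fin d) ℤ, IsUnit A.det ∧ intMatMap A '' P = Q

end

section Helpers

lemma pairR_comm {d : ℕ} (x y : Fin d → ℝ) : pairR x y = pairR y x := by
  simp [pairR, mul_comm]

lemma pairR_add_right {d : ℕ} (x y z : Fin d → ℝ) :
    pairR x (y + z) = pairR x y + pairR x z := by
  simp [pairR, mul_add, Finset.sum_add_distrib]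

lemma pairR_smul_right {d : ℕ} (x : Fin d → ℝ) (c : ℝ) (y : Fin d → ℝ) :
    pairR x (c • y) = c * pairR x y := by
  simp only [pairR, Pi.smul_apply, smul_eq_mul, Finset.mul_sum]
  exact Finset.sum_congr rfl (fun i _ => by ring)

lemma pairR_neg_right {d : ℕ} (x y : Fin d → ℝ) : pairR x (-y) = - pairR x y := by
  simp only [pairR, Pi.neg_apply, mul_neg, Finset.sum_neg_distrib]

lemma pairR_sub_right {d : ℕ} (x y z : Fin d → ℝ) :
    pairR x (y - z) = pairR x y - pairR x z := by
  simp [pairR, mul_sub, Finset.sum_sub_distrib]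

lemma pairR_zero_right {d : ℕ} (x : Fin d → ℝ) : pairR x 0 = 0 := by simp [pairR]

lemma pairR_single {d : ℕ} (i : Fin d) (y : Fin d → ℝ) :
    pairR (Pi.single i 1) y = y i := by
  rw [pairR, Finset.sum_eq_single i] <;> simp +contextual [Pi.single_apply]

lemma pairR_add_left {d : ℕ} (x y z : Fin d → ℝ) :
    pairR (x + y) z = pairR x z + pairR y z := by
  rw [pairR_comm, pairR_add_right, pairR_comm z x, pairR_comm z y]

lemma pairR_smul_left {d : ℕ} (c : ℝ) (x z : Fin d → ℝ) :
    pairR (c • x) z = c * pairR x z := by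
  rw [pairR_comm, pairR_smul_right, pairR_comm z x]

lemma pairR_sub_left {d : ℕ} (x y z : Fin d → ℝ) :
    pairR (x - y) z = pairR x z - pairR y z := by
  rw [pairR_comm, pairR_sub_right, pairR_comm z x, pairR_comm z y]

lemma int_step {x : ℝ} (h : ∃ n : ℤ, x = (n : ℝ)) {k : ℤ} (hx : (k : ℝ) < x) :
    (k : ℝ) + 1 ≤ x := by
  obtain ⟨n, rfl⟩ := h
  exact_mod_cast Int.add_one_le_of_lt (by exact_mod_cast hx)

lemma int_cases_le {x : ℝ} (h : ∃ n : ℤ, x = (n : ℝ)) : x ≤ 0 ∨ 1 ≤ x := by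
  obtain ⟨n, rfl⟩ := h
  rcases le_or_gt n 0 with h1 | h1
  · exact Or.inl (by exact_mod_cast h1)
  · exact Or.inr (by exact_mod_cast h1)

lemma pairR_int {d : ℕ} {x y : Fin d → ℝ} (hx : IsLatticePt x) (hy : IsLatticePt y) :
    ∃ n : ℤ, pairR x y = (n : ℝ) := by
  choose a ha using hx
  choose b hb using hy
  exact ⟨∑ i, a i * b i, by simp [pairR, ha, hb]⟩

lemma latt_neg {d : ℕ} {x : Fin d → ℝ} (hx : IsLatticePt x) : IsLatticePt (-x) := by
  intro i; obtain ⟨n, hn⟩ := hx i; exact ⟨-n, by simp [hn]⟩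

lemma latt_add {d : ℕ} {x y : Fin d → ℝ} (hx : IsLatticePt x) (hy : IsLatticePt y) :
    IsLatticePt (x + y) := by
  intro i; obtain ⟨n, hn⟩ := hx i; obtain ⟨m, hm⟩ := hy i
  exact ⟨n + m, by simp [hn, hm]⟩

/-- Metric characterization of the intrinsic interior. -/
lemma mem_intrinsicInterior_iff {d : ℕ} {s : Set (Fin d → ℝ)} {x : Fin d → ℝ} :
    x ∈ intrinsicInterior ℝ s ↔
      x ∈ s ∧ ∃ ε > 0, ∀ z ∈ affineSpan ℝ s, dist z x < ε → z ∈ s := by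
  constructor
  · rintro hx
    obtain ⟨p, hp, rfl⟩ := hx
    have hps : (p : Fin d → ℝ) ∈ s := Set.mem_preimage.1 (interior_subset hp)
    refine ⟨hps, ?_⟩
    rw [mem_interior_iff_mem_nhds, Metric.mem_nhds_iff] at hp
    obtain ⟨ε, hε, hball⟩ := hp
    refine ⟨ε, hε, fun z hz hdist => ?_⟩
    have : (⟨z, hz⟩ : affineSpan ℝ s) ∈ Metric.ball p ε := by
      simpa [Metric.mem_ball, Subtype.dist_eq] using hdist
    exact hball this
  · rintro ⟨hxs, ε, hε, h⟩
    have hxa : x ∈ affineSpan ℝ s := subset_affineSpan ℝ s hxs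
    refine ⟨⟨x, hxa⟩, ?_, rfl⟩
    rw [mem_interior_iff_mem_nhds, Metric.mem_nhds_iff]
    refine ⟨ε, hε, fun z hz => ?_⟩
    exact h z.1 z.2 (by simpa [Metric.mem_ball, Subtype.dist_eq] using hz)

/-- From a relative interior point one can move slightly beyond, away from any
point of the set, staying in the set. -/
lemma beyond_mem {d : ℕ} {s : Set (Fin d → ℝ)} {x y : Fin d → ℝ}
    (hx : x ∈ intrinsicInterior ℝ s) (hy : y ∈ s) :
    ∃ ε : ℝ, 0 < ε ∧ x + ε • (x - y) ∈ s := by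
  rw [mem_intrinsicInterior_iff] at hx
  obtain ⟨hxs, ε, hε, h⟩ := hx
  set D := dist x y with hD
  have hD0 : 0 ≤ D := dist_nonneg
  set δ := ε / (2 * (D + 1)) with hδdef
  have hδ : 0 < δ := div_pos hε (by linarith)
  refine ⟨δ, hδ, ?_⟩
  have hzspan : x + δ • (x - y) ∈ affineSpan ℝ s := by
    rw [add_comm]
    exact AffineSubspace.smul_vsub_vadd_mem (affineSpan ℝ s) δ
      (subset_affineSpan ℝ s hxs) (subset_affineSpan ℝ s hy) (subset_affineSpan ℝ s hxs)
  refine h _ hzspan ?_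
  have heq : dist (x + δ • (x - y)) x = δ * D := by
    rw [dist_eq_norm]
    simp only [add_sub_cancel_left, norm_smul, Real.norm_eq_abs, abs_of_pos hδ]
    rw [hD, dist_eq_norm]
  rw [heq]
  have h1 : δ * (D + 1) = ε / 2 := by
    rw [hδdef]; field_simp
  nlinarith

/-- The midpoint of a relative interior point and a point of a convex set is in the
relative interior. -/
lemma mid_mem {d : ℕ} {s : Set (Fin d → ℝ)} (hconv : Convex ℝ s) {x y : Fin d → ℝ}
    (hx : x ∈ intrinsicInterior ℝ s) (hy : y ∈ s) :
    (2⁻¹ : ℝ) • (x + y) ∈ intrinsicInterior ℝ s := by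
  rw [mem_intrinsicInterior_iff] at hx ⊢
  obtain ⟨hxs, ε, hε, h⟩ := hx
  have hmem : (2⁻¹ : ℝ) • (x + y) ∈ s := by
    have := hconv hxs hy (by norm_num : (0:ℝ) ≤ 2⁻¹) (by norm_num : (0:ℝ) ≤ 2⁻¹) (by norm_num)
    simpa [smul_add] using this
  refine ⟨hmem, ε / 2, by linarith, fun z hz hdist => ?_⟩
  have hz'span : (2 : ℝ) • (z - y) + y ∈ affineSpan ℝ s :=
    AffineSubspace.smul_vsub_vadd_mem (affineSpan ℝ s) (2:ℝ)
      hz (subset_affineSpan ℝ s hy) (subset_affineSpan ℝ s hy)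
  have hzx : (2 : ℝ) • (z - y) + y - x = (2 : ℝ) • (z - (2⁻¹ : ℝ) • (x + y)) := by
    funext i
    simp only [Pi.smul_apply, Pi.sub_apply, Pi.add_apply, smul_eq_mul]
    ring
  have hz's : (2 : ℝ) • (z - y) + y ∈ s := by
    refine h _ hz'span ?_
    rw [dist_eq_norm, hzx, norm_smul]
    rw [dist_eq_norm] at hdist
    simp only [Real.norm_eq_abs]
    rw [abs_of_pos (by norm_num : (0:ℝ) < 2)]
    linarith
  have hcombo : z = (2⁻¹ : ℝ) • ((2 : ℝ) • (z - y) + y) + (2⁻¹ : ℝ) • y := by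
    funext i
    simp only [Pi.smul_apply, Pi.sub_apply, Pi.add_apply, smul_eq_mul]
    ring
  rw [hcombo]
  exact hconv hz's hy (by norm_num) (by norm_num) (by norm_num)

/-- The linear functional `z ↦ ⟨z, a⟩`. -/
noncomputable def pairL {d : ℕ} (a : Fin d → ℝ) : (Fin d → ℝ) →ₗ[ℝ] ℝ where
  toFun z := pairR z a
  map_add' x y := pairR_add_left x y a
  map_smul' c x := by simp only [smul_eq_mul, RingHom.id_apply]; exact pairR_smul_left c x a

/-- Any valid inequality `⟨y, ·⟩ ≥ -1` that is tight at a relative interior point of a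
facet has `y` equal to the facet normal. -/
lemma facet_normal_unique {d : ℕ} {P F : Set (Fin d → ℝ)} {η : Fin d → ℝ}
    (hF : IsFacetNormal P η F) {m : Fin d → ℝ} (hm : m ∈ intrinsicInterior ℝ F)
    {y : Fin d → ℝ} (hy : ∀ x ∈ P, -1 ≤ pairR y x) (hmy : pairR y m = -1) : y = η := by
  obtain ⟨hvalid, hFdef, hFne, hrank⟩ := hF
  have hFP : F ⊆ P := by rw [hFdef]; exact fun z hz => hz.1
  have hmF : m ∈ F := intrinsicInterior_subset hm
  have hηm : pairR η m = -1 := by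
    have := hFdef ▸ hmF; exact this.2
  have hηz : ∀ z ∈ F, pairR η z = -1 := fun z hz => (hFdef ▸ hz).2
  have hkey : ∀ z ∈ F, pairR y z = -1 := by
    intro z hz
    obtain ⟨ε, hε, hmem⟩ := beyond_mem hm hz
    have h1 : -1 ≤ pairR y (m + ε • (m - z)) := hy _ (hFP hmem)
    have h2 : -1 ≤ pairR y z := hy _ (hFP hz)
    rw [pairR_add_right, pairR_smul_right, pairR_sub_right, hmy] at h1
    nlinarith
  rcases Nat.eq_zero_or_pos d with hd | hd
  · subst hd; norm_num [pairR] at hηm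
  have hFker : F ⊆ (LinearMap.ker (pairL (y - η)) : Set (Fin d → ℝ)) := by
    intro z hz
    simp only [SetLike.mem_coe, LinearMap.mem_ker, pairL, LinearMap.coe_mk, AddHom.coe_mk]
    rw [pairR_sub_right, pairR_comm z y, pairR_comm z η, hkey z hz, hηz z hz]
    ring
  have hspanker : Submodule.span ℝ F ≤ LinearMap.ker (pairL (y - η)) :=
    Submodule.span_le.2 hFker
  have hvs_le : vectorSpan ℝ F ≤ Submodule.span ℝ F := by
    rw [vectorSpan]
    refine Submodule.span_le.2 ?_
    rintro u hu
    obtain ⟨p, hp, q, hq, rfl⟩ := hu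
    exact Submodule.sub_mem _ (Submodule.subset_span hp) (Submodule.subset_span hq)
  have hmnot : m ∉ vectorSpan ℝ F := by
    intro hmem
    have hker : vectorSpan ℝ F ≤ LinearMap.ker (pairL η) := by
      rw [vectorSpan]
      refine Submodule.span_le.2 ?_
      rintro u hu
      obtain ⟨p, hp, q, hq, rfl⟩ := hu
      simp only [SetLike.mem_coe, LinearMap.mem_ker, pairL, LinearMap.coe_mk, AddHom.coe_mk,
        vsub_eq_sub]
      rw [pairR_sub_left, pairR_comm p η, pairR_comm q η, hηz p hp, hηz q hq]
      ring
    have := hker hmem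
    simp only [LinearMap.mem_ker, pairL, LinearMap.coe_mk, AddHom.coe_mk] at this
    rw [pairR_comm m η, hηm] at this
    norm_num at this
  have hlt : vectorSpan ℝ F < Submodule.span ℝ F :=
    lt_of_le_of_ne hvs_le (fun he => hmnot (he ▸ Submodule.subset_span hmF))
  have hfr : Module.finrank ℝ (vectorSpan ℝ F) < Module.finrank ℝ (Submodule.span ℝ F) :=
    Submodule.finrank_lt_finrank_of_lt hlt
  have hle : Module.finrank ℝ (Submodule.span ℝ F) ≤ d :=
    le_trans (Submodule.finrank_le _) (le_of_eq (Module.finrank_fin_fun ℝ))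
  have htop : Submodule.span ℝ F = ⊤ := by
    apply Submodule.eq_top_of_finrank_eq
    rw [Module.finrank_fin_fun ℝ]
    omega
  have hall : ∀ z : Fin d → ℝ, pairR z (y - η) = 0 := by
    intro z
    have : z ∈ LinearMap.ker (pairL (y - η)) := hspanker (htop ▸ Submodule.mem_top)
    simpa only [LinearMap.mem_ker, pairL, LinearMap.coe_mk, AddHom.coe_mk] using this
  funext i
  have h := hall (Pi.single i 1)
  rw [pairR_single] at h
  have h' : y i - η i = 0 := h
  linarith

/-- A linear functional bounded below on a set is also bounded below on its convex hull. -/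
lemma hull_pair_le {d : ℕ} {c : ℝ} (x : Fin d → ℝ) {s : Set (Fin d → ℝ)}
    (h : ∀ z ∈ s, c ≤ pairR x z) {y : Fin d → ℝ} (hy : y ∈ convexHull ℝ s) :
    c ≤ pairR x y :=
  convexHull_min h (convex_halfSpace_ge
    ⟨pairR_add_right x, fun r z => pairR_smul_right x r z⟩ c) hy

/-- H-representation of a reflexive polytope: membership is given by the finitely many
inequalities from the lattice points spanning the dual. -/
lemma memP_iff {d : ℕ} {P : Set (Fin d → ℝ)} (hlat : IsLatticePolytope P)
    (h0 : (0 : Fin d → ℝ) ∈ interior P) {V' : Finset (Fin d → ℝ)}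
    (hPV' : polarDual P = convexHull ℝ (V' : Set (Fin d → ℝ))) (x : Fin d → ℝ) :
    x ∈ P ↔ ∀ u ∈ V', -1 ≤ pairR u x := by
  obtain ⟨V, hVlat, hPV⟩ := hlat
  constructor
  · intro hx u hu
    have hu' : u ∈ polarDual P := hPV' ▸ subset_convexHull ℝ (V' : Set (Fin d → ℝ)) hu
    rw [pairR_comm]
    exact hu' x hx
  · intro hx
    by_contra hxP
    have hPconv : Convex ℝ P := hPV ▸ convex_convexHull ℝ _
    have hPcl : IsClosed P := hPV ▸ (Set.Finite.isCompact_convexHull (𝕜 := ℝ) V.finite_toSet).isClosed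
    obtain ⟨f, u, hfu, hux⟩ := geometric_hahn_banach_closed_point hPconv hPcl hxP
    have hu0 : 0 < u := by
      have := hfu 0 (interior_subset h0)
      simpa using this
    set e : Fin d → (Fin d → ℝ) := fun i j => if i = j then 1 else 0 with hedef
    set y : Fin d → ℝ := fun i => -(f (e i)) / u with hydef
    have hfy : ∀ z : Fin d → ℝ, pairR z y = -(f z) / u := by
      intro z
      have hz : f z = ∑ i, z i * f (e i) := by
        conv_lhs => rw [pi_eq_sum_univ z]
        rw [map_sum]
        exact Finset.sum_congr rfl fun i _ => by rw [map_smul]; rfl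
      have hterm : ∀ i : Fin d, z i * y i = z i * f (e i) * (-1 / u) := by
        intro i; rw [hydef]; ring
      rw [pairR, Finset.sum_congr rfl fun i _ => hterm i, ← Finset.sum_mul, ← hz]
      ring
    have hyP : y ∈ polarDual P := by
      intro z hz
      rw [hfy z, le_div_iff₀ hu0]
      have := hfu z hz
      linarith
    have h1 : -1 ≤ pairR x y := by
      have hyhull : y ∈ convexHull ℝ (V' : Set (Fin d → ℝ)) := hPV' ▸ hyP
      exact hull_pair_le x (fun z hz => by rw [pairR_comm]; exact hx z hz) hyhull
    rw [hfy x, le_div_iff₀ hu0] at h1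
    linarith

/-- A compact set containing a full ray must have direction zero. -/
lemma ray_zero {d : ℕ} {P : Set (Fin d → ℝ)} (hcomp : IsCompact P) {x : Fin d → ℝ}
    (hmem : ∀ lam : ℝ, 0 ≤ lam → lam • x ∈ P) : x = 0 := by
  obtain ⟨C, hC⟩ := (isBounded_iff_forall_norm_le).1 hcomp.isBounded
  by_contra hx0
  have hxn : 0 < ‖x‖ := norm_pos_iff.2 hx0
  have hC0 : 0 ≤ C := by simpa using hC _ (hmem 0 le_rfl)
  have := hC _ (hmem ((C + 1) / ‖x‖) (by positivity))
  rw [norm_smul, Real.norm_eq_abs, abs_of_nonneg (by positivity), div_mul_cancel₀] at this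
  · linarith
  · exact ne_of_gt hxn

/-- The normal of a facet having a relative interior point is among the lattice points
spanning the dual polytope. -/
lemma normal_mem_V' {d : ℕ} {P F : Set (Fin d → ℝ)} {η m : Fin d → ℝ}
    (hF : IsFacetNormal P η F) (hm : m ∈ intrinsicInterior ℝ F)
    {V' : Finset (Fin d → ℝ)}
    (hPV' : polarDual P = convexHull ℝ (V' : Set (Fin d → ℝ))) : η ∈ V' := by
  have hmF : m ∈ F := intrinsicInterior_subset hm
  have hmP : m ∈ P := (hF.2.1 ▸ hmF).1
  have hηm : pairR η m = -1 := (hF.2.1 ▸ hmF).2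
  have hηdual : η ∈ polarDual P := fun z hz => by rw [pairR_comm]; exact hF.1 z hz
  have hne : V'.Nonempty := by
    rw [Finset.nonempty_iff_ne_empty]
    rintro rfl
    rw [Finset.coe_empty, convexHull_empty] at hPV'
    exact absurd (hPV' ▸ hηdual) (Set.notMem_empty η)
  obtain ⟨u₀, hu₀V, hu₀min⟩ := V'.exists_min_image (fun u => pairR m u) hne
  have hu₀dual : u₀ ∈ polarDual P := hPV' ▸ subset_convexHull ℝ (V' : Set (Fin d → ℝ)) hu₀V
  have h1 : pairR m u₀ ≤ -1 := by
    have hmin : pairR m u₀ ≤ pairR m η :=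
      hull_pair_le m (fun z hz => hu₀min z hz) (hPV' ▸ hηdual)
    rw [pairR_comm m η, hηm] at hmin
    exact hmin
  have h2 : -1 ≤ pairR m u₀ := hu₀dual m hmP
  have : u₀ = η := by
    refine facet_normal_unique ⟨hF.1, hF.2.1, hF.2.2.1, hF.2.2.2⟩ hm
      (fun z hz => by rw [pairR_comm]; exact hu₀dual z hz) ?_
    rw [pairR_comm]
    linarith
  exact this ▸ hu₀V

/-- A dual lattice point other than the facet normal pairs nonnegatively with a lattice
point in the relative interior of the facet. -/
lemma rel_nonneg {d : ℕ} {P F : Set (Fin d → ℝ)} {η m : Fin d → ℝ}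
    (hF : IsFacetNormal P η F) (hm : m ∈ intrinsicInterior ℝ F) (hlat : IsLatticePt m)
    {V' : Finset (Fin d → ℝ)} (hV'lat : ∀ u ∈ V', IsLatticePt u)
    (hPV' : polarDual P = convexHull ℝ (V' : Set (Fin d → ℝ)))
    {u : Fin d → ℝ} (huV : u ∈ V') (hneq : u ≠ η) : 0 ≤ pairR u m := by
  have hmF : m ∈ F := intrinsicInterior_subset hm
  have hmP : m ∈ P := (hF.2.1 ▸ hmF).1
  have hu_dual : u ∈ polarDual P := hPV' ▸ subset_convexHull ℝ (V' : Set (Fin d → ℝ)) huV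
  have hge : -1 ≤ pairR u m := by rw [pairR_comm]; exact hu_dual m hmP
  rcases eq_or_lt_of_le hge with heq | hlt
  · exact absurd (facet_normal_unique hF hm
      (fun z hz => by rw [pairR_comm]; exact hu_dual z hz) heq.symm) hneq
  · have := int_step (pairR_int (hV'lat u huV) hlat) (k := -1) (by exact_mod_cast hlt)
    push_cast at this
    linarith

end Helpers

/-- Let `v, w` be roots of a reflexive polytope `P` with `v ≠ -w` and `⟨η_v, w⟩ > 0`.
Then `⟨η_w, v⟩ = 0`, `v + w` is a root of `P` with `F_{v+w} = F_w`, and `v + w` is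
semisimple iff both `v` and `w` are semisimple. -/
theorem stmt5 {d : ℕ} (P : Set (Fin d → ℝ)) (hP : IsReflexive P)
    (v w : Fin d → ℝ) (hv : IsRoot P v) (hw : IsRoot P w) (hvw : v ≠ -w)
    (Fv : Set (Fin d → ℝ)) (ηv : Fin d → ℝ) (hFv : IsFacetNormal P ηv Fv)
    (hvFv : v ∈ intrinsicInterior ℝ Fv) (hpos : 0 < pairR ηv w) :
    (∀ (Fw : Set (Fin d → ℝ)) (ηw : Fin d → ℝ), IsFacetNormal P ηw Fw →
        w ∈ intrinsicInterior ℝ Fw →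
        pairR ηw v = 0 ∧ v + w ∈ intrinsicInterior ℝ Fw) ∧
    IsRoot P (v + w) ∧
    (IsRoot P (-(v + w)) ↔ IsRoot P (-v) ∧ IsRoot P (-w)) := by
  obtain ⟨hPlat, h0, hdual⟩ := hP
  obtain ⟨V', hV'lat, hPV'⟩ := hdual
  obtain ⟨V, hVlat, hPV⟩ := hPlat
  have memP : ∀ x, x ∈ P ↔ ∀ u ∈ V', -1 ≤ pairR u x :=
    memP_iff ⟨V, hVlat, hPV⟩ h0 hPV'
  have hPcomp : IsCompact P := hPV ▸ Set.Finite.isCompact_convexHull (𝕜 := ℝ) V.finite_toSet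
  have hPconv : Convex ℝ P := hPV ▸ convex_convexHull ℝ _
  have facet_convex : ∀ (η : Fin d → ℝ) (F : Set (Fin d → ℝ)),
      IsFacetNormal P η F → Convex ℝ F := by
    intro η F hF
    rw [hF.2.1]
    exact hPconv.inter (convex_hyperplane
      ⟨pairR_add_right η, fun r z => pairR_smul_right η r z⟩ (-1))
  have hlatv := hv.1
  have hlatw := hw.1
  have hvF : v ∈ Fv := intrinsicInterior_subset hvFv
  have hvP : v ∈ P := (hFv.2.1 ▸ hvF).1
  have hηvv : pairR ηv v = -1 := (hFv.2.1 ▸ hvF).2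
  have hηvV' : ηv ∈ V' := normal_mem_V' hFv hvFv hPV'
  have ha1 : 1 ≤ pairR ηv w := by
    have := int_step (pairR_int (hV'lat ηv hηvV') hlatw) (k := 0) (by exact_mod_cast hpos)
    push_cast at this
    linarith
  have hsum_ne : v + w ≠ 0 := fun h => hvw (eq_neg_of_add_eq_zero_left h)
  -- the main claim, for an arbitrary facet containing `w` in its relative interior
  have key : ∀ (Fw : Set (Fin d → ℝ)) (ηw : Fin d → ℝ), IsFacetNormal P ηw Fw →
      w ∈ intrinsicInterior ℝ Fw →
      pairR ηw v = 0 ∧ v + w ∈ intrinsicInterior ℝ Fw := by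
    intro Fw ηw hFw hwFw
    have hwF : w ∈ Fw := intrinsicInterior_subset hwFw
    have hwP : w ∈ P := (hFw.2.1 ▸ hwF).1
    have hηww : pairR ηw w = -1 := (hFw.2.1 ▸ hwF).2
    have hηwV' : ηw ∈ V' := normal_mem_V' hFw hwFw hPV'
    have hne_vw : ηv ≠ ηw := by
      intro h
      rw [h, hηww] at ha1
      linarith
    have hb0 : 0 ≤ pairR ηw v :=
      rel_nonneg hFv hvFv hlatv hV'lat hPV' hηwV' (Ne.symm hne_vw)
    have hb_le : pairR ηw v ≤ 0 := by
      by_contra hb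
      push_neg at hb
      have hb1 : 1 ≤ pairR ηw v := by
        have := int_step (pairR_int (hV'lat ηw hηwV') hlatv) (k := 0) (by exact_mod_cast hb)
        push_cast at this
        linarith
      have hall : ∀ u ∈ V', 0 ≤ pairR u (v + w) := by
        intro u huV
        rw [pairR_add_right]
        by_cases h1 : u = ηv
        · subst h1; rw [hηvv]; linarith
        by_cases h2 : u = ηw
        · subst h2; rw [hηww]; linarith
        · have hx1 := rel_nonneg hFv hvFv hlatv hV'lat hPV' huV h1
          have hx2 := rel_nonneg hFw hwFw hlatw hV'lat hPV' huV h2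
          linarith
      refine hsum_ne (ray_zero hPcomp fun lam hlam => (memP _).2 fun u huV => ?_)
      rw [pairR_smul_right]
      have := mul_nonneg hlam (hall u huV)
      linarith
    have hb : pairR ηw v = 0 := le_antisymm hb_le hb0
    refine ⟨hb, ?_⟩
    have hmemsum : ∀ u ∈ V', u ≠ ηw → 0 ≤ pairR u (v + w) := by
      intro u huV h2
      rw [pairR_add_right]
      by_cases h1 : u = ηv
      · subst h1; rw [hηvv]; linarith
      · have hx1 := rel_nonneg hFv hvFv hlatv hV'lat hPV' huV h1
        have hx2 := rel_nonneg hFw hwFw hlatw hV'lat hPV' huV h2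
        linarith
    have hsumP : v + w ∈ P := by
      rw [memP]
      intro u huV
      by_cases h2 : u = ηw
      · subst h2; rw [pairR_add_right, hb, hηww]; norm_num
      · linarith [hmemsum u huV h2]
    have hzP : w + (2:ℝ) • v ∈ P := by
      rw [memP]
      intro u huV
      rw [pairR_add_right, pairR_smul_right]
      by_cases h2 : u = ηw
      · subst h2; rw [hηww, hb]; norm_num
      by_cases h1 : u = ηv
      · subst h1; rw [hηvv]; linarith
      · have hx1 := rel_nonneg hFv hvFv hlatv hV'lat hPV' huV h1
        have hx2 := rel_nonneg hFw hwFw hlatw hV'lat hPV' huV h2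
        linarith
    have hzF : w + (2:ℝ) • v ∈ Fw := by
      rw [hFw.2.1]
      exact ⟨hzP, by rw [pairR_add_right, pairR_smul_right, hηww, hb]; ring⟩
    have hmid := mid_mem (facet_convex ηw Fw hFw) hwFw hzF
    have heq : (2⁻¹ : ℝ) • (w + (w + (2:ℝ) • v)) = v + w := by
      funext i
      simp only [Pi.smul_apply, Pi.add_apply, smul_eq_mul]
      ring
    rwa [heq] at hmid
  -- set up the distinguished facet of `w`
  obtain ⟨F₀, hF₀facet, hwF₀⟩ := hw.2
  obtain ⟨η₀, hF₀⟩ := hF₀facet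
  have hkey₀ := key F₀ η₀ hF₀ hwF₀
  have hb : pairR η₀ v = 0 := hkey₀.1
  have hwF : w ∈ F₀ := intrinsicInterior_subset hwF₀
  have hwP : w ∈ P := (hF₀.2.1 ▸ hwF).1
  have hww : pairR η₀ w = -1 := (hF₀.2.1 ▸ hwF).2
  have hη₀V' : η₀ ∈ V' := normal_mem_V' hF₀ hwF₀ hPV'
  have hηvη₀ : ηv ≠ η₀ := by
    intro h
    rw [h, hww] at ha1
    linarith
  have hη₀sum : pairR η₀ (v + w) = -1 := by rw [pairR_add_right, hb, hww]; ring
  refine ⟨key, ⟨latt_add hlatv hlatw, F₀, ⟨η₀, hF₀⟩, hkey₀.2⟩, ?_⟩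
  constructor
  · -- -(v+w) root → -v and -w are roots
    intro hroot
    obtain ⟨hlatm, G, ⟨θ, hG⟩, hmemG⟩ := hroot
    have hmG : -(v + w) ∈ G := intrinsicInterior_subset hmemG
    have hθm : pairR θ (-(v + w)) = -1 := (hG.2.1 ▸ hmG).2
    have hθ : pairR θ (v + w) = 1 := by
      rw [pairR_neg_right] at hθm
      linarith
    have hθV' : θ ∈ V' := normal_mem_V' hG hmemG hPV'
    have hθη₀ : θ ≠ η₀ := by
      intro h
      rw [h, hη₀sum] at hθ
      linarith
    have hle_nonθ : ∀ u ∈ V', u ≠ θ → pairR u (v + w) ≤ 0 := by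
      intro u huV hne
      have := rel_nonneg hG hmemG hlatm hV'lat hPV' huV hne
      rw [pairR_neg_right] at this
      linarith
    have hvne : v ≠ 0 := by
      intro h
      rw [h, pairR_zero_right] at hηvv
      linarith
    by_cases hθv : θ = ηv
    · -- impossible: `-v` would span a ray inside `P`
      exfalso
      apply hvne
      have : -v = 0 := by
        refine ray_zero hPcomp fun lam hlam => (memP _).2 fun u huV => ?_
        rw [pairR_smul_right, pairR_neg_right]
        have hnn : 0 ≤ -pairR u v := by
          by_cases h1 : u = ηv
          · subst h1; rw [hηvv]; norm_num
          · have huθ : u ≠ θ := fun h => h1 (h.trans hθv)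
            have hs := hle_nonθ u huV huθ
            rw [pairR_add_right] at hs
            by_cases h2 : u = η₀
            · subst h2; rw [hb]; norm_num
            · have hx2 := rel_nonneg hF₀ hwF₀ hlatw hV'lat hPV' huV h2
              linarith
        have := mul_nonneg hlam hnn
        linarith
      simpa using congrArg Neg.neg this
    · have hηvθ : ηv ≠ θ := Ne.symm hθv
      have haeq : pairR ηv w = 1 := by
        have h1 := hle_nonθ ηv hηvV' hηvθ
        rw [pairR_add_right, hηvv] at h1
        linarith
      have hαθ0 : 0 ≤ pairR θ v := rel_nonneg hFv hvFv hlatv hV'lat hPV' hθV' hθv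
      have hβθ0 : 0 ≤ pairR θ w := rel_nonneg hF₀ hwF₀ hlatw hV'lat hPV' hθV' hθη₀
      have hsplit : pairR θ v + pairR θ w = 1 := by rw [← pairR_add_right]; exact hθ
      have hgen : ∀ u ∈ V', u ≠ ηv → u ≠ η₀ → u ≠ θ →
          pairR u v = 0 ∧ pairR u w = 0 := by
        intro u huV h1 h2 h3
        have hx1 := rel_nonneg hFv hvFv hlatv hV'lat hPV' huV h1
        have hx2 := rel_nonneg hF₀ hwF₀ hlatw hV'lat hPV' huV h2
        have hs := hle_nonθ u huV h3
        rw [pairR_add_right] at hs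
        constructor <;> linarith
      rcases int_cases_le (pairR_int (hV'lat θ hθV') hlatv) with hc | hc
      · -- impossible: `-v` would span a ray inside `P`
        exfalso
        apply hvne
        have : -v = 0 := by
          refine ray_zero hPcomp fun lam hlam => (memP _).2 fun u huV => ?_
          rw [pairR_smul_right, pairR_neg_right]
          have hnn : 0 ≤ -pairR u v := by
            by_cases h1 : u = ηv
            · subst h1; rw [hηvv]; norm_num
            by_cases h2 : u = η₀
            · subst h2; rw [hb]; norm_num
            by_cases h3 : u = θ
            · subst h3; linarith [le_antisymm hc hαθ0]
            · linarith [(hgen u huV h1 h2 h3).1]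
          have := mul_nonneg hlam hnn
          linarith
        simpa using congrArg Neg.neg this
      · have hαθ : pairR θ v = 1 := le_antisymm (by linarith) hc
        have hβθ : pairR θ w = 0 := by linarith
        constructor
        · -- -v is a root, lying on the facet G
          refine ⟨latt_neg hlatv, G, ⟨θ, hG⟩, ?_⟩
          have hz2P : w - v ∈ P := by
            rw [memP]
            intro u huV
            rw [pairR_sub_right]
            by_cases h1 : u = ηv
            · subst h1; rw [hηvv, haeq]; norm_num
            by_cases h2 : u = η₀
            · subst h2; rw [hb, hww]; norm_num
            by_cases h3 : u = θ
            · subst h3; rw [hαθ, hβθ]; norm_num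
            · obtain ⟨e1, e2⟩ := hgen u huV h1 h2 h3
              rw [e1, e2]; norm_num
          have hz2G : w - v ∈ G := by
            rw [hG.2.1]
            exact ⟨hz2P, by rw [pairR_sub_right, hαθ, hβθ]; ring⟩
          have hmid := mid_mem (facet_convex θ G hG) hmemG hz2G
          have heq : (2⁻¹ : ℝ) • (-(v + w) + (w - v)) = -v := by
            funext i
            simp only [Pi.smul_apply, Pi.add_apply, Pi.sub_apply, Pi.neg_apply, smul_eq_mul]
            ring
          rwa [heq] at hmid
        · -- -w is a root, lying on the facet Fv
          refine ⟨latt_neg hlatw, Fv, ⟨ηv, hFv⟩, ?_⟩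
          have hz1P : -v - (2:ℝ) • w ∈ P := by
            rw [memP]
            intro u huV
            rw [pairR_sub_right, pairR_neg_right, pairR_smul_right]
            by_cases h1 : u = ηv
            · subst h1; rw [hηvv, haeq]; norm_num
            by_cases h2 : u = η₀
            · subst h2; rw [hb, hww]; norm_num
            by_cases h3 : u = θ
            · subst h3; rw [hαθ, hβθ]; norm_num
            · obtain ⟨e1, e2⟩ := hgen u huV h1 h2 h3
              rw [e1, e2]; norm_num
          have hz1F : -v - (2:ℝ) • w ∈ Fv := by
            rw [hFv.2.1]
            exact ⟨hz1P, by
              rw [pairR_sub_right, pairR_neg_right, pairR_smul_right, hηvv, haeq]; ring⟩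
          have hmid := mid_mem (facet_convex ηv Fv hFv) hvFv hz1F
          have heq : (2⁻¹ : ℝ) • (v + (-v - (2:ℝ) • w)) = -w := by
            funext i
            simp only [Pi.smul_apply, Pi.add_apply, Pi.sub_apply, Pi.neg_apply, smul_eq_mul]
            ring
          rwa [heq] at hmid
  · -- -v and -w roots → -(v+w) is a root
    rintro ⟨hnv, hnw⟩
    obtain ⟨hlnv, F₁, ⟨θ₁, hF₁⟩, h₁⟩ := hnv
    obtain ⟨hlnw, F₂, ⟨θ₂, hF₂⟩, h₂⟩ := hnw
    have hθ₁V' : θ₁ ∈ V' := normal_mem_V' hF₁ h₁ hPV'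
    have hθ₂V' : θ₂ ∈ V' := normal_mem_V' hF₂ h₂ hPV'
    have hθ₁v : pairR θ₁ v = 1 := by
      have := (hF₁.2.1 ▸ intrinsicInterior_subset h₁).2
      rw [pairR_neg_right] at this
      linarith
    have hθ₂w : pairR θ₂ w = 1 := by
      have := (hF₂.2.1 ▸ intrinsicInterior_subset h₂).2
      rw [pairR_neg_right] at this
      linarith
    have hθ₂ηv : θ₂ = ηv := by
      by_contra hc
      have := rel_nonneg hF₂ h₂ hlnw hV'lat hPV' hηvV' (fun h => hc h.symm)
      rw [pairR_neg_right] at this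
      linarith
    have ha : pairR ηv w = 1 := by rw [← hθ₂ηv]; exact hθ₂w
    have hθ₁ηv : θ₁ ≠ ηv := by
      intro h
      rw [h, hηvv] at hθ₁v
      linarith
    have hθ₁η₀ : θ₁ ≠ η₀ := by
      intro h
      rw [h, hb] at hθ₁v
      linarith
    have hβθ₁ : pairR θ₁ w = 0 := by
      have h1 := rel_nonneg hF₂ h₂ hlnw hV'lat hPV' hθ₁V' (hθ₂ηv ▸ hθ₁ηv)
      rw [pairR_neg_right] at h1
      have h2 := rel_nonneg hF₀ hwF₀ hlatw hV'lat hPV' hθ₁V' hθ₁η₀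
      linarith
    have hgen : ∀ u ∈ V', u ≠ ηv → u ≠ η₀ → u ≠ θ₁ →
        pairR u v = 0 ∧ pairR u w = 0 := by
      intro u huV h1 h2 h3
      have hx1 := rel_nonneg hFv hvFv hlatv hV'lat hPV' huV h1
      have hx2 := rel_nonneg hF₀ hwF₀ hlatw hV'lat hPV' huV h2
      have hy1 := rel_nonneg hF₁ h₁ hlnv hV'lat hPV' huV h3
      have hy2 := rel_nonneg hF₂ h₂ hlnw hV'lat hPV' huV (hθ₂ηv ▸ h1)
      rw [pairR_neg_right] at hy1 hy2
      constructor <;> linarith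
    refine ⟨latt_neg (latt_add hlatv hlatw), F₁, ⟨θ₁, hF₁⟩, ?_⟩
    have hz₃P : -v - (2:ℝ) • w ∈ P := by
      rw [memP]
      intro u huV
      rw [pairR_sub_right, pairR_neg_right, pairR_smul_right]
      by_cases h1 : u = ηv
      · subst h1; rw [hηvv, ha]; norm_num
      by_cases h2 : u = η₀
      · subst h2; rw [hb, hww]; norm_num
      by_cases h3 : u = θ₁
      · subst h3; rw [hθ₁v, hβθ₁]; norm_num
      · obtain ⟨e1, e2⟩ := hgen u huV h1 h2 h3
        rw [e1, e2]; norm_num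
    have hz₃F₁ : -v - (2:ℝ) • w ∈ F₁ := by
      rw [hF₁.2.1]
      exact ⟨hz₃P, by
        rw [pairR_sub_right, pairR_neg_right, pairR_smul_right, hθ₁v, hβθ₁]; ring⟩
    have hmid := mid_mem (facet_convex θ₁ F₁ hF₁) h₁ hz₃F₁
    have heq : (2⁻¹ : ℝ) • (-v + (-v - (2:ℝ) • w)) = -(v + w) := by
      funext i
      simp only [Pi.smul_apply, Pi.add_apply, Pi.sub_apply, Pi.neg_apply, smul_eq_mul]
      ring
    rwa [heq] at hmid
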